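/- Consider two defenders on the unit-circumference circle with speeds v1 ≥ v2 > 0 and attacks at unit time intervals. If v1 + 3·v2 ≥ 1, then starting from antipodal positions (distance 1/2 apart) and with a one-step horizon, the defenders can thwart every attack in any sequence of attacks. -/
import Mathlib


/-- Arc-length distance on the circle of circumference 1, with points
represented by arbitrary reals taken modulo 1. -/
noncomputable def circDist (a b : ℝ) : ℝ :=
  min (Int.fract (a - b)) (1 - Int.fract (a - b))

lemma circDist_nonneg (a b : ℝ) : 0 ≤ circDist a b := by
  have h1 := Int.fract_nonneg (a - b)
  have h2 := Int.fract_lt_one (a - b)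
  simp only [circDist, le_min_iff]
  constructor <;> linarith

lemma circDist_self (a : ℝ) : circDist a a = 0 := by
  simp [circDist]

lemma circDist_comm (a b : ℝ) : circDist a b = circDist b a := by
  unfold circDist
  by_cases hf : Int.fract (a - b) = 0
  · have hg : Int.fract (b - a) = 0 := by
      rw [show b - a = -(a - b) by ring, Int.fract_neg_eq_zero]; exact hf
    rw [hf, hg]
  · have hg : Int.fract (b - a) = 1 - Int.fract (a - b) := by
      rw [show b - a = -(a - b) by ring, Int.fract_neg hf]
    rw [hg, sub_sub_cancel, min_comm]

lemma circDist_congr {a b a' b' : ℝ} (k : ℤ) (h : a - b = a' - b' + k) :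
    circDist a b = circDist a' b' := by
  unfold circDist
  rw [h, Int.fract_add_intCast]

lemma circDist_eq_abs {a b : ℝ} (h : |a - b| ≤ 1/2) : circDist a b = |a - b| := by
  unfold circDist
  rcases abs_le.mp h with ⟨h1, h2⟩
  rcases le_or_gt 0 (a - b) with h0 | h0
  · rw [Int.fract_eq_self.mpr ⟨h0, by linarith⟩, abs_of_nonneg h0]
    exact min_eq_left (by linarith)
  · have hfr : Int.fract (a - b) = a - b + 1 := by
      have e1 : Int.fract (a - b + 1) = a - b + 1 :=
        Int.fract_eq_self.mpr ⟨by linarith, by linarith⟩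
      have e2 : a - b + 1 = a - b + ((1 : ℤ) : ℝ) := by
        push_cast
        ring
      ring_nf
      rw [e2, Int.fract_add_intCast] at e1
      rw [e1]
      ring
    rw [hfr, abs_of_neg h0, min_eq_right (by linarith)]
    ring

lemma circDist_cases (a b c : ℝ) :
    Int.fract (a - c) = Int.fract (a - b) + Int.fract (b - c) ∨
    Int.fract (a - c) = Int.fract (a - b) + Int.fract (b - c) - 1 := by
  have key : Int.fract (a - c) = Int.fract (Int.fract (a - b) + Int.fract (b - c)) := by
    apply (Int.fract_eq_fract).mpr
    refine ⟨⌊a - b⌋ + ⌊b - c⌋, ?_⟩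
    push_cast
    simp only [Int.fract]
    ring
  have hf0 := Int.fract_nonneg (a - b)
  have hg0 := Int.fract_nonneg (b - c)
  have hf1 := Int.fract_lt_one (a - b)
  have hg1 := Int.fract_lt_one (b - c)
  rcases lt_or_ge (Int.fract (a - b) + Int.fract (b - c)) 1 with hlt | hge
  · left
    rw [key, Int.fract_eq_self.mpr ⟨by linarith, hlt⟩]
  · right
    have e2 : Int.fract (a - b) + Int.fract (b - c)
        = (Int.fract (a - b) + Int.fract (b - c) - 1) + ((1 : ℤ) : ℝ) := by
      push_cast
      ring
    rw [key, e2, Int.fract_add_intCast, Int.fract_eq_self.mpr ⟨by linarith, by linarith⟩]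
    push_cast
    ring

lemma circDist_triangle (a b c : ℝ) : circDist a c ≤ circDist a b + circDist b c := by
  have hf0 := Int.fract_nonneg (a - b)
  have hg0 := Int.fract_nonneg (b - c)
  have hf1 := Int.fract_lt_one (a - b)
  have hg1 := Int.fract_lt_one (b - c)
  unfold circDist
  rcases circDist_cases a b c with hcase | hcase <;>
    rw [hcase] <;>
    rw [min_def, min_def, min_def] <;>
    split_ifs <;> linarith

lemma circDist_three (a b c : ℝ) : circDist a b + circDist b c + circDist a c ≤ 1 := by
  have hf0 := Int.fract_nonneg (a - b)
  have hg0 := Int.fract_nonneg (b - c)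
  have hf1 := Int.fract_lt_one (a - b)
  have hg1 := Int.fract_lt_one (b - c)
  unfold circDist
  rcases circDist_cases a b c with hcase | hcase <;>
    rw [hcase] <;>
    rw [min_def, min_def, min_def] <;>
    split_ifs <;> linarith

/-- Move from near `x` to the point at distance `min (1/2) (circDist x z + v)` from `z`,
on the same side of `z` as `x`. -/
noncomputable def away (v x z : ℝ) : ℝ :=
  if Int.fract (x - z) ≤ 1/2 then z + min (1/2) (circDist x z + v)
  else z - min (1/2) (circDist x z + v)

lemma away_dist {v : ℝ} (hv : 0 ≤ v) (x z : ℝ) : circDist x (away v x z) ≤ v := by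
  have hf0 := Int.fract_nonneg (x - z)
  have hf1 := Int.fract_lt_one (x - z)
  have hxz : x - z = Int.fract (x - z) + (⌊x - z⌋ : ℝ) := by
    simp only [Int.fract]
    ring
  unfold away
  split_ifs with hc
  · have hD : circDist x z = Int.fract (x - z) := min_eq_left (by linarith)
    set t := min (1/2) (circDist x z + v) with htdef
    have ht2 : t ≤ 1/2 := min_le_left _ _
    have htv : t ≤ Int.fract (x - z) + v := by rw [htdef, hD]; exact min_le_right _ _
    have htf : Int.fract (x - z) ≤ t := le_min (by linarith) (by rw [hD]; linarith)
    have e1 : circDist x (z + t) = circDist (z + Int.fract (x - z)) (z + t) :=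
      circDist_congr ⌊x - z⌋ (by linarith)
    have e2 : circDist (z + Int.fract (x - z)) (z + t)
        = |z + Int.fract (x - z) - (z + t)| := by
      apply circDist_eq_abs
      rw [show z + Int.fract (x - z) - (z + t) = Int.fract (x - z) - t by ring,
        abs_of_nonpos (by linarith)]
      linarith
    rw [e1, e2, show z + Int.fract (x - z) - (z + t) = Int.fract (x - z) - t by ring,
      abs_of_nonpos (by linarith)]
    linarith
  · push_neg at hc
    have hD : circDist x z = 1 - Int.fract (x - z) := min_eq_right (by linarith)
    set t := min (1/2) (circDist x z + v) with htdef
    have ht2 : t ≤ 1/2 := min_le_left _ _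
    have htv : t ≤ 1 - Int.fract (x - z) + v := by rw [htdef, hD]; exact min_le_right _ _
    have htf : 1 - Int.fract (x - z) ≤ t := le_min (by linarith) (by rw [hD]; linarith)
    have e1 : circDist x (z - t) = circDist (z + Int.fract (x - z) - 1) (z - t) :=
      circDist_congr (⌊x - z⌋ + 1) (by push_cast; linarith)
    have e2 : circDist (z + Int.fract (x - z) - 1) (z - t)
        = |z + Int.fract (x - z) - 1 - (z - t)| := by
      apply circDist_eq_abs
      rw [show z + Int.fract (x - z) - 1 - (z - t) = Int.fract (x - z) + t - 1 by ring,
        abs_of_nonneg (by linarith)]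
      linarith
    rw [e1, e2, show z + Int.fract (x - z) - 1 - (z - t) = Int.fract (x - z) + t - 1 by ring,
      abs_of_nonneg (by linarith)]
    linarith

lemma away_sep {v : ℝ} (hv : 0 ≤ v) (x z : ℝ) :
    circDist (away v x z) z = min (1/2) (circDist x z + v) := by
  have hD0 : 0 ≤ circDist x z := circDist_nonneg x z
  set t := min (1/2) (circDist x z + v) with htdef
  have ht0 : 0 ≤ t := le_min (by norm_num) (by linarith)
  have ht2 : t ≤ 1/2 := min_le_left _ _
  unfold away
  split_ifs with hc
  · have : circDist (z + t) z = |z + t - z| := by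
      apply circDist_eq_abs
      rw [show z + t - z = t by ring, abs_of_nonneg ht0]; exact ht2
    rw [this, show z + t - z = t by ring, abs_of_nonneg ht0]
  · have : circDist (z - t) z = |z - t - z| := by
      apply circDist_eq_abs
      rw [show z - t - z = -t by ring, abs_neg, abs_of_nonneg ht0]; exact ht2
    rw [this, show z - t - z = -t by ring, abs_neg, abs_of_nonneg ht0]

/-- The one-step strategy: if defender 2 can reach the attack it services it and
defender 1 retreats; otherwise defender 1 services it and defender 2 retreats. -/
noncomputable def strat (v₁ v₂ : ℝ) : ℝ × ℝ → ℝ → ℝ × ℝ := fun p w =>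
  if circDist p.2 w ≤ v₂ then (away v₁ p.1 w, w) else (w, away v₂ p.2 w)

noncomputable def traj (v₁ v₂ p₁ p₂ : ℝ) (z : ℕ → ℝ) : ℕ → ℝ × ℝ
  | 0 => (p₁, p₂)
  | t + 1 => strat v₁ v₂ (traj v₁ v₂ p₁ p₂ z t) (z (t + 1))

/-- Two defenders with speeds `v₁ ≥ v₂ > 0` on the unit circle, attacks at unit
time intervals. If `v₁ + 3 v₂ ≥ 1` then, starting from antipodal positions and
using only a one-step horizon (the next position may depend only on the current
positions and the next attack), the defenders can thwart every attack of any
sequence of attacks. -/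
theorem perfect_defense (v₁ v₂ : ℝ) (h21 : v₂ ≤ v₁) (h2 : 0 < v₂)
    (h : 1 ≤ v₁ + 3 * v₂) (p₁ p₂ : ℝ) (hp : circDist p₁ p₂ = 1/2) :
    ∃ σ : ℝ × ℝ → ℝ → ℝ × ℝ,
      ∀ z : ℕ → ℝ,
        ∃ d : ℕ → ℝ × ℝ,
          d 0 = (p₁, p₂) ∧
          (∀ t : ℕ, d (t + 1) = σ (d t) (z (t + 1))) ∧
          (∀ t : ℕ, circDist (d t).1 (d (t + 1)).1 ≤ v₁) ∧
          (∀ t : ℕ, circDist (d t).2 (d (t + 1)).2 ≤ v₂) ∧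
          (∀ t : ℕ, circDist (d (t + 1)).1 (z (t + 1)) = 0 ∨
            circDist (d (t + 1)).2 (z (t + 1)) = 0) := by
  have hv1 : 0 < v₁ := lt_of_lt_of_le h2 h21
  refine ⟨strat v₁ v₂, fun z => ?_⟩
  set d : ℕ → ℝ × ℝ := traj v₁ v₂ p₁ p₂ z with hd
  have hd0 : d 0 = (p₁, p₂) := rfl
  have hds : ∀ t, d (t + 1) = strat v₁ v₂ (d t) (z (t + 1)) := fun t => rfl
  -- the invariant: the defenders remain at distance at least 1 - v₁ - v₂
  have hinv : ∀ t, 1 - v₁ - v₂ ≤ circDist (d t).1 (d t).2 := by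
    intro t
    induction t with
    | zero =>
      rw [hd0]
      simp only
      rw [hp]
      linarith
    | succ t ih =>
      rw [hds t]
      unfold strat
      by_cases hc : circDist (d t).2 (z (t + 1)) ≤ v₂
      · rw [if_pos hc]
        simp only
        rw [away_sep (le_of_lt hv1)]
        refine le_min (by linarith) ?_
        have htri := circDist_triangle (d t).1 (z (t + 1)) (d t).2
        rw [circDist_comm (z (t + 1)) (d t).2] at htri
        linarith
      · rw [if_neg hc]
        simp only
        rw [circDist_comm, away_sep (le_of_lt h2)]
        push_neg at hc
        exact le_min (by linarith) (by linarith)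
  refine ⟨d, hd0, hds, ?_, ?_, ?_⟩
  · intro t
    rw [hds t]
    unfold strat
    by_cases hc : circDist (d t).2 (z (t + 1)) ≤ v₂
    · rw [if_pos hc]
      exact away_dist (le_of_lt hv1) _ _
    · rw [if_neg hc]
      push_neg at hc
      have h3 := circDist_three (d t).1 (d t).2 (z (t + 1))
      have hi := hinv t
      simp only
      linarith
  · intro t
    rw [hds t]
    unfold strat
    by_cases hc : circDist (d t).2 (z (t + 1)) ≤ v₂
    · rw [if_pos hc]
      exact hc
    · rw [if_neg hc]
      exact away_dist (le_of_lt h2) _ _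
  · intro t
    rw [hds t]
    unfold strat
    by_cases hc : circDist (d t).2 (z (t + 1)) ≤ v₂
    · rw [if_pos hc]
      exact Or.inr (circDist_self _)
    · rw [if_neg hc]
      exact Or.inl (circDist_self _)
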